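/- arXiv:2101.01721 — 2 statements merged into one kernel-verified Lean document; each statement's English description precedes it below -/
import Mathlib

section
/- The permutation ρ_e(n,k) ∈ S_n defined by ρ(1)=n, ρ(i)=i+(n-k) for 2≤i≤k-1, and ρ(i)=i-(k-1) for k≤i≤n is an n-cycle if and only if gcd(n-k, n-1)=1. -/
/-- The permutation ρ_e(n,k) ∈ S_n (elements of `Fin n` labelled `i+1 ∈ {1,…,n}`)
is an n-cycle (acts transitively) iff gcd(n-k, n-1) = 1. -/
theorem stmt_0 (n k : ℕ) (hn : 3 ≤ n) (hk : 2 ≤ k) (hk' : k ≤ n - 1)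
    (ρ : Equiv.Perm (Fin n))
    (hρ : ∀ i : Fin n, ((ρ i : ℕ) + 1) =
      if (i : ℕ) + 1 = 1 then n
      else if (i : ℕ) + 1 ≤ k - 1 then (i : ℕ) + 1 + (n - k)
      else (i : ℕ) + 1 - (k - 1)) :
    (∀ a b : Fin n, ∃ m : ℕ, (ρ ^ m) a = b) ↔ Nat.gcd (n - k) (n - 1) = 1 := by
  set M := n - 1 with hM
  set c := n - k with hc
  have hcpos : 1 ≤ c := by omega
  have hcM : c < M := by omega
  have hval : ∀ i : Fin n, ((ρ i : ℕ)) =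
      if (i : ℕ) = 0 then M
      else if (i : ℕ) ≤ k - 2 then (i : ℕ) + c
      else (i : ℕ) - (k - 1) := by
    intro i
    have h := hρ i
    have hi := i.isLt
    have hri := (ρ i).isLt
    split_ifs at h ⊢ <;> omega
  constructor
  · -- transitive → gcd = 1
    intro h
    set d := Nat.gcd c M with hd
    have hdc : d ∣ c := Nat.gcd_dvd_left _ _
    have hdM : d ∣ M := Nat.gcd_dvd_right _ _
    have hd0 : 0 < d := Nat.pos_of_dvd_of_pos hdc (by omega)
    by_contra hd1
    have hd2 : 2 ≤ d := by omega
    obtain ⟨p, hp⟩ := hdc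
    obtain ⟨q, hq⟩ := hdM
    have hdk : d ∣ (k - 1) := by
      have h2 := Nat.dvd_sub (Dvd.intro q hq.symm) (Dvd.intro p hp.symm)
      rwa [show M - c = k - 1 by omega] at h2
    obtain ⟨r, hr⟩ := hdk
    have hstep : ∀ x : Fin n, ((ρ x : ℕ)) % d = (x : ℕ) % d := by
      intro x
      have hx := x.isLt
      rw [hval x]
      split_ifs with h0 h1
      · rw [h0, hq, Nat.mul_mod_right, Nat.zero_mod]
      · rw [hp, Nat.add_mul_mod_self_left]
      · have h2 : (x : ℕ) % d = (((x : ℕ) - (k - 1)) + d * r) % d := by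
          congr 1; omega
        rw [h2, Nat.add_mul_mod_self_left]
    have hiter : ∀ t : ℕ, ∀ x : Fin n, (((ρ ^ t) x : ℕ)) % d = (x : ℕ) % d := by
      intro t
      induction t with
      | zero => intro x; simp
      | succ t ih =>
        intro x
        rw [pow_succ, Equiv.Perm.mul_apply, ih (ρ x), hstep x]
    obtain ⟨t, ht⟩ := h ⟨0, by omega⟩ ⟨1, by omega⟩
    have h3 := hiter t ⟨0, by omega⟩
    rw [ht] at h3
    simp only [Fin.val_mk, Nat.zero_mod] at h3
    rw [Nat.mod_eq_of_lt (by omega)] at h3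
    exact one_ne_zero h3
  · -- gcd = 1 → transitive
    intro hg
    haveI : NeZero M := ⟨by omega⟩
    -- reachability relation
    have Rtrans : ∀ {a b c2 : Fin n}, (∃ t : ℕ, (ρ ^ t) a = b) → (∃ t : ℕ, (ρ ^ t) b = c2) →
        (∃ t : ℕ, (ρ ^ t) a = c2) := by
      rintro a b c2 ⟨s, rfl⟩ ⟨t, rfl⟩
      exact ⟨t + s, by rw [pow_add, Equiv.Perm.mul_apply]⟩
    have Rsymm : ∀ {a b : Fin n}, (∃ t : ℕ, (ρ ^ t) a = b) → (∃ t : ℕ, (ρ ^ t) b = a) := by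
      rintro a b ⟨t, rfl⟩
      refine ⟨orderOf ρ * t - t, ?_⟩
      have hop : 0 < orderOf ρ := orderOf_pos ρ
      have hle : t ≤ orderOf ρ * t := Nat.le_mul_of_pos_left t hop
      have h1 : (ρ ^ (orderOf ρ * t - t)) * ρ ^ t = ρ ^ (orderOf ρ * t) := by
        rw [← pow_add]; congr 1; omega
      calc (ρ ^ (orderOf ρ * t - t)) ((ρ ^ t) a)
          = ((ρ ^ (orderOf ρ * t - t)) * ρ ^ t) a := rfl
        _ = (ρ ^ (orderOf ρ * t)) a := by rw [h1]
        _ = a := by rw [pow_mul, pow_orderOf_eq_one, one_pow, Equiv.Perm.one_apply]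
    -- solving t * c ≡ j - 1 (mod M)
    have hsolve : ∀ j : ℕ, 1 ≤ j → j ≤ M → ∃ t : ℕ, (t * c) % M = j - 1 := by
      intro j hj1 hjM
      have hu : IsUnit ((c : ℕ) : ZMod M) := by
        rw [ZMod.isUnit_iff_coprime]
        exact hg
      refine ⟨(((c : ℕ) : ZMod M)⁻¹ * ((j - 1 : ℕ) : ZMod M)).val * 1, ?_⟩
      set u : ZMod M := ((c : ℕ) : ZMod M)⁻¹ * ((j - 1 : ℕ) : ZMod M) with hu'
      have hcast : ((u.val * 1 * c : ℕ) : ZMod M) = ((j - 1 : ℕ) : ZMod M) := by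
        push_cast
        rw [ZMod.natCast_val, ZMod.cast_id, mul_one, hu']
        calc ((c : ℕ) : ZMod M)⁻¹ * ((j - 1 : ℕ) : ZMod M) * ((c : ℕ) : ZMod M)
            = ((j - 1 : ℕ) : ZMod M) * (((c : ℕ) : ZMod M)⁻¹ * ((c : ℕ) : ZMod M)) := by ring
          _ = ((j - 1 : ℕ) : ZMod M) := by rw [ZMod.inv_mul_of_unit _ hu, mul_one]
      have hmod : (u.val * 1 * c) % M = (j - 1) % M :=
        (ZMod.natCast_eq_natCast_iff _ _ _).mp hcast
      rw [Nat.mod_eq_of_lt (show j - 1 < M by omega)] at hmod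
      exact hmod
    -- orbit of ⟨1, _⟩ covers all residues
    have hreach : ∀ t : ℕ, ∃ s : ℕ, (ρ ^ s) (⟨1, by omega⟩ : Fin n) =
        ⟨(t * c) % M + 1, by have := Nat.mod_lt (t * c) (show 0 < M by omega); omega⟩ := by
      intro t
      induction t with
      | zero =>
        refine ⟨0, ?_⟩
        simp [Fin.ext_iff]
      | succ t ih =>
        have hvlt : (t * c) % M < M := Nat.mod_lt _ (by omega)
        have hnext : ((t + 1) * c) % M = ((t * c) % M + c) % M := by
          rw [add_mul, one_mul, Nat.add_mod (t * c) c, Nat.mod_eq_of_lt hcM]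
        obtain ⟨s, hs⟩ := ih
        -- step from label v+1
        rcases lt_trichotomy ((t * c) % M + 1) (k - 1) with hcase | hcase | hcase
        · -- one step, no wraparound: v + 1 ≤ k - 2
          refine ⟨s + 1, ?_⟩
          rw [pow_succ', Equiv.Perm.mul_apply, hs]
          apply Fin.ext
          rw [hval]
          have he : ((t + 1) * c) % M = (t * c) % M + c := by
            rw [hnext, Nat.mod_eq_of_lt (by omega)]
          simp only [Fin.val_mk]
          split_ifs <;> first | contradiction | omega
        · -- two steps through label 1: v + 1 = k - 1
          refine ⟨s + 2, ?_⟩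
          rw [show s + 2 = 1 + (1 + s) from by omega, pow_add, Equiv.Perm.mul_apply,
            pow_add, Equiv.Perm.mul_apply, pow_one, hs]
          have e1 : ρ (⟨(t * c) % M + 1, by omega⟩ : Fin n) = ⟨0, by omega⟩ := by
            apply Fin.ext
            rw [hval]
            simp only [Fin.val_mk]
            split_ifs <;> first | contradiction | omega
          rw [e1]
          apply Fin.ext
          rw [hval]
          have he : ((t + 1) * c) % M = M - 1 := by
            rw [hnext, show (t * c) % M + c = M - 1 from by omega, Nat.mod_eq_of_lt (by omega)]
          simp only [Fin.val_mk]
          split_ifs <;> first | contradiction | omega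
        · -- one step with wraparound: v + 1 ≥ k
          refine ⟨s + 1, ?_⟩
          rw [pow_succ', Equiv.Perm.mul_apply, hs]
          apply Fin.ext
          rw [hval]
          have he : ((t + 1) * c) % M = (t * c) % M + c - M := by
            rw [hnext, Nat.mod_eq_sub_mod (show M ≤ (t * c) % M + c from by omega),
              Nat.mod_eq_of_lt (by omega)]
          simp only [Fin.val_mk]
          split_ifs <;> first | contradiction | omega
    -- every element is reachable from ⟨1, _⟩
    have hall : ∀ b : Fin n, ∃ s : ℕ, (ρ ^ s) (⟨1, by omega⟩ : Fin n) = b := by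
      intro b
      rcases Nat.eq_zero_or_pos (b : ℕ) with hb0 | hb0
      · -- b = label 1; reach label k then step
        obtain ⟨t, ht⟩ := hsolve (k - 1) (by omega) (by omega)
        obtain ⟨s, hs⟩ := hreach t
        refine ⟨s + 1, ?_⟩
        rw [pow_succ', Equiv.Perm.mul_apply, hs]
        apply Fin.ext
        rw [hval]
        simp only [Fin.val_mk]
        split_ifs <;> first | contradiction | omega
      · obtain ⟨t, ht⟩ := hsolve (b : ℕ) hb0 (by have := b.isLt; omega)
        obtain ⟨s, hs⟩ := hreach t
        refine ⟨s, ?_⟩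
        rw [hs]
        apply Fin.ext
        simp only [Fin.val_mk]
        omega
    intro a b
    exact Rtrans (Rsymm (hall a)) (hall b)
end

section
/- Each companion polynomial q_g (g ≥ 2) is monic of degree g and has a real root α_g > 2. -/
open Polynomial

/-- d_g(t) = t^{2g} + 1 + 3·Σ_{i=1}^{2g-1}(-1)^i t^i. -/
noncomputable def dPoly (g : ℕ) : Polynomial ℤ :=
  X ^ (2 * g) + 1 + 3 * ∑ i ∈ Finset.Icc 1 (2 * g - 1), (-1 : Polynomial ℤ) ^ i * X ^ i

open Filter Topology Asymptotics

private lemma dPoly_monic (g : ℕ) (hg : 1 ≤ g) :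
    (dPoly g).Monic ∧ (dPoly g).natDegree = 2 * g := by
  have hS : ((1 : ℤ[X]) + 3 * ∑ i ∈ Finset.Icc 1 (2 * g - 1),
      (-1 : ℤ[X]) ^ i * X ^ i).degree < ((X : ℤ[X]) ^ (2 * g)).degree := by
    have h1 : ((1 : ℤ[X]) + 3 * ∑ i ∈ Finset.Icc 1 (2 * g - 1),
        (-1 : ℤ[X]) ^ i * X ^ i).natDegree ≤ 2 * g - 1 := by
      refine le_trans (natDegree_add_le _ _) ?_
      simp only [natDegree_one, Nat.zero_le, max_le_iff, true_and]
      refine le_trans (natDegree_mul_le) ?_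
      have : ((3 : ℤ[X])).natDegree = 0 := natDegree_C (a := (3:ℤ)) ▸ by
        norm_num
      rw [this, zero_add]
      refine natDegree_sum_le_of_forall_le _ _ fun i hi => ?_
      refine le_trans (natDegree_mul_le) ?_
      have h1 : ((-1 : ℤ[X]) ^ i).natDegree = 0 := by
        simp [natDegree_pow]
      rw [h1, zero_add, natDegree_X_pow]
      exact (Finset.mem_Icc.mp hi).2
    calc ((1 : ℤ[X]) + 3 * ∑ i ∈ Finset.Icc 1 (2 * g - 1),
        (-1 : ℤ[X]) ^ i * X ^ i).degree ≤ (2 * g - 1 : ℕ) :=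
          degree_le_natDegree.trans (by exact_mod_cast Nat.cast_le.mpr h1)
      _ < ((2 * g : ℕ) : WithBot ℕ) := by exact_mod_cast (by omega : 2 * g - 1 < 2 * g)
      _ = ((X : ℤ[X]) ^ (2 * g)).degree := (degree_X_pow _).symm
  have hd : dPoly g = X ^ (2 * g) + ((1 : ℤ[X]) + 3 * ∑ i ∈ Finset.Icc 1 (2 * g - 1),
      (-1 : ℤ[X]) ^ i * X ^ i) := by
    rw [dPoly]; ring
  constructor
  · rw [hd]; exact (monic_X_pow _).add_of_left hS
  · rw [hd, natDegree_add_eq_left_of_degree_lt hS, natDegree_X_pow]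

private lemma tendsto_eval_div_pow (p : ℝ[X]) (hp : p ≠ 0) :
    Tendsto (fun x : ℝ => eval x p / x ^ p.natDegree) atTop (𝓝 p.leadingCoeff) := by
  have h := Polynomial.div_tendsto_leadingCoeff_div_of_degree_eq p (X ^ p.natDegree)
    (by rw [degree_X_pow, degree_eq_natDegree hp])
  simpa using h

/-- For g ≥ 2, each companion polynomial q_g is monic of degree g and has a real
root α_g > 2. -/
theorem stmt_15 (g : ℕ) (hg : 2 ≤ g) (q : Polynomial ℤ)
    (hq : ∀ t : ℝ, t ≠ 0 →
      Polynomial.aeval t (dPoly g) = t ^ g * Polynomial.aeval (t + t⁻¹) q) :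
    q.Monic ∧ q.natDegree = g ∧ ∃ α : ℝ, 2 < α ∧ Polynomial.aeval α q = 0 := by
  have hinj : Function.Injective (Int.castRingHom ℝ) := Int.cast_injective
  set qr : ℝ[X] := q.map (Int.castRingHom ℝ) with hqrdef
  set dr : ℝ[X] := (dPoly g).map (Int.castRingHom ℝ) with hdrdef
  have key : ∀ t : ℝ, t ≠ 0 → eval t dr = t ^ g * eval (t + t⁻¹) qr := by
    intro t ht
    have := hq t ht
    simpa [aeval_def, eval₂_eq_eval_map] using this
  -- d is monic of degree 2g
  obtain ⟨hdm, hddeg⟩ := dPoly_monic g (by omega)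
  have hdrm : dr.Monic := hdm.map _
  have hdrdeg : dr.natDegree = 2 * g := by
    rw [hdrdef, natDegree_map_eq_of_injective hinj, hddeg]
  -- value at 2 is -1
  have hq2 : eval (2 : ℝ) qr = -1 := by
    have h1 := key 1 one_ne_zero
    have hd1 : eval (1 : ℝ) dr = -1 := by
      have hIcc : Finset.Icc 1 (2 * g - 1) = Finset.Ico 1 (2 * g) := by
        rw [← Finset.Ico_add_one_right_eq_Icc]
        congr 1
        omega
      have hsum : (∑ i ∈ Finset.Icc 1 (2 * g - 1), (-1 : ℝ) ^ i) = -1 := by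
        rw [hIcc, Finset.sum_Ico_eq_sub _ (by omega : 1 ≤ 2 * g)]
        simp [Finset.sum_range_one, Nat.even_mul]
      simp only [hdrdef, dPoly, Polynomial.map_add, Polynomial.map_pow, Polynomial.map_one,
        Polynomial.map_mul, Polynomial.map_sum, Polynomial.map_ofNat, map_X, Polynomial.map_neg,
        eval_add, eval_pow, eval_one, eval_mul, eval_ofNat, eval_finset_sum, eval_X, eval_neg,
        one_pow, mul_one]
      rw [hsum]; ring
    rw [hd1, one_pow, one_mul] at h1
    norm_num at h1
    linarith [h1]
  have hqr0 : qr ≠ 0 := by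
    intro h
    rw [h] at hq2
    simp at hq2
  have hq0 : q ≠ 0 := by
    intro h
    apply hqr0
    rw [hqrdef, h, Polynomial.map_zero]
  have hc0 : qr.leadingCoeff ≠ 0 := leadingCoeff_ne_zero.mpr hqr0
  set n := qr.natDegree with hn
  set c := qr.leadingCoeff with hc
  -- limits
  have hT : Tendsto (fun t : ℝ => t + t⁻¹) atTop atTop :=
    tendsto_id.atTop_add tendsto_inv_atTop_zero
  have hA : Tendsto (fun x : ℝ => eval x qr / x ^ n) atTop (𝓝 c) :=
    tendsto_eval_div_pow qr hqr0
  have hcomp : Tendsto (fun t : ℝ => eval (t + t⁻¹) qr / (t + t⁻¹) ^ n) atTop (𝓝 c) :=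
    hA.comp hT
  have hratio : Tendsto (fun t : ℝ => ((t + t⁻¹) / t) ^ n) atTop (𝓝 1) := by
    have h1 : Tendsto (fun t : ℝ => 1 + t⁻¹ * t⁻¹) atTop (𝓝 1) := by
      have := (tendsto_inv_atTop_zero (𝕜 := ℝ)).mul (tendsto_inv_atTop_zero (𝕜 := ℝ))
      simpa using (tendsto_const_nhds (x := (1:ℝ))).add this
    have h2 : Tendsto (fun t : ℝ => (1 + t⁻¹ * t⁻¹) ^ n) atTop (𝓝 1) := by
      simpa using h1.pow n
    refine h2.congr' ?_
    filter_upwards [eventually_gt_atTop (0 : ℝ)] with t ht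
    congr 1
    field_simp
  have hB : Tendsto (fun t : ℝ => eval (t + t⁻¹) qr / t ^ n) atTop (𝓝 c) := by
    have := hcomp.mul hratio
    rw [mul_one] at this
    refine this.congr' ?_
    filter_upwards [eventually_gt_atTop (0 : ℝ)] with t ht
    have htt : (0 : ℝ) < t + t⁻¹ := by positivity
    rw [div_pow, div_mul_div_comm, mul_comm (eval (t + t⁻¹) qr) _,
      mul_div_mul_left _ _ (pow_ne_zero n htt.ne')]
  have hD : Tendsto (fun t : ℝ => eval t dr / t ^ (2 * g)) atTop (𝓝 1) := by
    have := tendsto_eval_div_pow dr hdrm.ne_zero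
    rwa [hdrdeg, hdrm.leadingCoeff] at this
  have hE : Tendsto (fun t : ℝ => eval (t + t⁻¹) qr / t ^ g) atTop (𝓝 1) := by
    refine hD.congr' ?_
    filter_upwards [eventually_gt_atTop (0 : ℝ)] with t ht
    rw [key t ht.ne', two_mul, pow_add]
    field_simp
  -- n = g
  have hng : n = g := by
    by_contra hne
    rcases lt_or_gt_of_ne hne with hlt | hgt
    · -- n < g : limit of eval/t^g would be 0
      have hz : Tendsto (fun t : ℝ => (t ^ (g - n))⁻¹) atTop (𝓝 0) := by
        refine Tendsto.inv_tendsto_atTop ?_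
        exact tendsto_pow_atTop (by omega)
      have := hB.mul hz
      rw [mul_zero] at this
      have heq : Tendsto (fun t : ℝ => eval (t + t⁻¹) qr / t ^ g) atTop (𝓝 0) := by
        refine this.congr' ?_
        filter_upwards [eventually_gt_atTop (0 : ℝ)] with t ht
        have : t ^ g = t ^ n * t ^ (g - n) := by
          rw [← pow_add]; congr 1; omega
        rw [this]
        field_simp
      exact one_ne_zero (tendsto_nhds_unique hE heq)
    · -- g < n : limit of eval/t^n would be 0, but it's c ≠ 0
      have hz : Tendsto (fun t : ℝ => (t ^ (n - g))⁻¹) atTop (𝓝 0) := by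
        refine Tendsto.inv_tendsto_atTop ?_
        exact tendsto_pow_atTop (by omega)
      have := hE.mul hz
      rw [one_mul] at this
      have heq : Tendsto (fun t : ℝ => eval (t + t⁻¹) qr / t ^ n) atTop (𝓝 0) := by
        refine this.congr' ?_
        filter_upwards [eventually_gt_atTop (0 : ℝ)] with t ht
        have : t ^ n = t ^ g * t ^ (n - g) := by
          rw [← pow_add]; congr 1; omega
        rw [this]
        field_simp
      exact hc0 (tendsto_nhds_unique hB heq)
  have hc1 : c = 1 := by
    rw [hng] at hB
    exact tendsto_nhds_unique hB hE
  -- conclude Monic and degree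
  have hdeg : q.natDegree = g := by
    rw [← hng, hn, hqrdef, natDegree_map_eq_of_injective hinj]
  have hmon : q.Monic := by
    have h := leadingCoeff_map_of_injective hinj q
    rw [← hqrdef] at h
    have h2 : qr.leadingCoeff = 1 := by rw [← hc, hc1]
    rw [h2] at h
    have h3 : ((q.leadingCoeff : ℝ)) = 1 := by simpa using h.symm
    exact_mod_cast h3
  refine ⟨hmon, hdeg, ?_⟩
  -- root via IVT
  have hAg : Tendsto (fun x : ℝ => eval x qr / x ^ g) atTop (𝓝 1) := by
    have := hA
    rwa [hng, hc1] at this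
  have hev : ∀ᶠ x : ℝ in atTop, (1/2 : ℝ) < eval x qr / x ^ g :=
    hAg.eventually (eventually_gt_nhds (by norm_num))
  obtain ⟨x, hx2, hxpos⟩ := ((eventually_gt_atTop (2 : ℝ)).and hev).exists
  have hxgt : (0 : ℝ) < eval x qr := by
    have hx0 : (0 : ℝ) < x := by linarith
    have := hxpos
    have hxg : (0 : ℝ) < x ^ g := by positivity
    nlinarith [div_mul_cancel₀ (eval x qr) (ne_of_gt hxg)]
  have hcont : ContinuousOn (fun y : ℝ => eval y qr) (Set.Icc 2 x) :=
    (Polynomial.continuous qr).continuousOn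
  have h0mem : (0 : ℝ) ∈ Set.Icc (eval (2:ℝ) qr) (eval x qr) := by
    rw [hq2]
    constructor <;> linarith
  obtain ⟨α, hαmem, hαroot⟩ := intermediate_value_Icc (le_of_lt hx2) hcont h0mem
  refine ⟨α, ?_, ?_⟩
  · rcases lt_or_eq_of_le hαmem.1 with h | h
    · exact h
    · exfalso
      have h0 : eval (2 : ℝ) qr = 0 := by rw [h]; exact hαroot
      rw [hq2] at h0
      norm_num at h0
  · rw [aeval_def, eval₂_eq_eval_map]
    exact hαroot
end
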